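/- Recursion lemma: with f_λ as above and λ = μ + ν, μ ≠ 0, ν ≠ 0 dominant, for any dominant t the coefficient n_λ(t) equals n_{μ,ν}^t plus a universal expression g depending only on the values n_μ(y), n_ν(z), n_s(x) for dominant weights with μ ⪇ λ, ν ⪇ λ, s ⪯ λ and μ−y ⪯ λ−t, ν−z ⪯ λ−t, s−x ⪨ λ−t. In particular, if all these 'smaller' values agree with the corresponding multiplicities m, and n_{μ,ν}^t = c_{μ,ν}^t, then n_λ(t) = m_λ(t). -/

import Mathlib

/-! Weights of a rank-`l` semisimple Lie algebra are recorded by their coordinates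
`λ i = ⟨λ, α_i^∨⟩` w.r.t. the fundamental weights, so the weight lattice is
`Λ = Fin l → ℤ` and the group ring `ℤ[Λ]` is `AddMonoidAlgebra ℤ (Fin l → ℤ)`,
with `e(λ) = Finsupp.single λ 1`. -/

/-- The simple root `α_j` in weight coordinates: `⟨α_j, α_i^∨⟩ = C i j` where `C` is the
Cartan matrix. -/
def alphaW {l : ℕ} (C : Matrix (Fin l) (Fin l) ℤ) (j : Fin l) : Fin l → ℤ :=
  fun i => C i j

/-- A weight is dominant iff all its coordinates are nonnegative. -/
def IsDominant {l : ℕ} (lam : Fin l → ℤ) : Prop := ∀ i, 0 ≤ lam i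

/-- The dominance order: `μ ⪯ λ` iff `λ - μ` is a nonnegative integer combination of the
simple roots. -/
def SubLE {l : ℕ} (C : Matrix (Fin l) (Fin l) ℤ) (μ lam : Fin l → ℤ) : Prop :=
  ∃ k : Fin l → ℕ, lam - μ = ∑ j, (k j : ℤ) • alphaW C j

/-- The simple reflection `s_i λ = λ - λ_i α_i`, acting on weight coordinates. -/
def srefW {l : ℕ} (C : Matrix (Fin l) (Fin l) ℤ) (i : Fin l) :
    AddMonoid.End (Fin l → ℤ) where
  toFun v := v - v i • alphaW C i
  map_zero' := by simp
  map_add' a b := by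
    funext j
    simp only [Pi.add_apply, Pi.sub_apply, Pi.smul_apply, smul_eq_mul]
    ring

/-- The Weyl group, realized as the monoid generated by the simple reflections. -/
def weylW {l : ℕ} (C : Matrix (Fin l) (Fin l) ℤ) : Submonoid (AddMonoid.End (Fin l → ℤ)) :=
  Submonoid.closure (Set.range (srefW C))

/-- An element `f ∈ ℤ[Λ]` is Weyl-invariant iff it is fixed by every simple reflection. -/
def WInvariant {l : ℕ} (C : Matrix (Fin l) (Fin l) ℤ)
    (f : AddMonoidAlgebra ℤ (Fin l → ℤ)) : Prop :=
  ∀ i, Finsupp.mapDomain (srefW C i) f.coeff = f.coeff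

/-- The invariant subring `ℤ[Λ]^W`, as a `ℤ`-submodule of `ℤ[Λ]`. -/
noncomputable def invariants {l : ℕ} (C : Matrix (Fin l) (Fin l) ℤ) :
    Submodule ℤ (AddMonoidAlgebra ℤ (Fin l → ℤ)) where
  carrier := {f | WInvariant C f}
  add_mem' := by
    intro a b ha hb i
    show Finsupp.mapDomain _ (a.coeff + b.coeff) = a.coeff + b.coeff
    rw [Finsupp.mapDomain_add, ha i, hb i]
  zero_mem' := by intro i; simp [Finsupp.mapDomain]
  smul_mem' := by
    intro r a ha i
    show Finsupp.mapDomain _ (r • a.coeff) = r • a.coeff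
    rw [Finsupp.mapDomain_smul, ha i]

/-- The data of the formal characters `ch_λ = Σ_x m_λ(x) e(x)` of the irreducible (Weyl)
modules `V(λ)` of a complex semisimple Lie algebra of rank `l`, together with the
Littlewood–Richardson coefficients `c_{μ,ν}^λ` and the longest Weyl group element `w0`,
axiomatized by their standard properties. -/
structure CharData (l : ℕ) where
  /-- the Cartan matrix -/
  C : Matrix (Fin l) (Fin l) ℤ
  /-- `ch lam` is the formal character of `V(lam)` (for `lam` dominant); its coefficient
  `ch lam x` is the weight multiplicity `m_lam(x) = dim V(lam)_x`. -/
  ch : (Fin l → ℤ) → AddMonoidAlgebra ℤ (Fin l → ℤ)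
  /-- the Littlewood–Richardson coefficients: `c μ ν lam` is the multiplicity of `V(lam)`
  in `V(μ) ⊗ V(ν)`. -/
  c : (Fin l → ℤ) → (Fin l → ℤ) → (Fin l → ℤ) → ℤ
  /-- the longest element of the Weyl group -/
  w0 : AddMonoid.End (Fin l → ℤ)
  /-- the highest weight has multiplicity one -/
  ch_lead : ∀ lam, IsDominant lam → (ch lam).coeff lam = 1
  /-- every weight of `V(lam)` is `⪯ lam` -/
  ch_le : ∀ lam x, IsDominant lam → (ch lam).coeff x ≠ 0 → SubLE C x lam
  /-- weight multiplicities are nonnegative -/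
  ch_nonneg : ∀ lam x, IsDominant lam → 0 ≤ (ch lam).coeff x
  /-- formal characters are Weyl invariant -/
  ch_inv : ∀ lam, IsDominant lam → WInvariant C (ch lam)
  /-- only finitely many `c μ ν lam` are nonzero -/
  c_finite : ∀ μ ν, (Function.support (c μ ν)).Finite
  /-- `c μ ν lam` vanishes unless `lam` is dominant -/
  c_dom : ∀ μ ν lam, c μ ν lam ≠ 0 → IsDominant lam
  /-- the defining decomposition `ch_μ · ch_ν = Σ_λ c_{μ,ν}^λ ch_λ` of a tensor product of
  irreducibles into irreducibles -/
  c_spec : ∀ μ ν, IsDominant μ → IsDominant ν →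
    ch μ * ch ν = ∑ᶠ lam, c μ ν lam • ch lam
  /-- `w0` lies in the Weyl group -/
  w0_mem : w0 ∈ weylW C
  /-- `w0` sends every simple root to the negative of a simple root (this characterizes
  the longest element) -/
  w0_long : ∀ i, ∃ j, w0 (alphaW C i) = -alphaW C j
  /-- `V(ν)* ≅ V(-w0 ν)`: the character of `V(-w0 ν)` is the image of `ch_ν` under
  `e(x) ↦ e(-x)` -/
  ch_dual : ∀ ν, IsDominant ν → (ch (-(w0 ν))).coeff = Finsupp.mapDomain (fun x => -x) (ch ν).coeff

section Aux

variable {l : ℕ} {C : Matrix (Fin l) (Fin l) ℤ}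

lemma subLE_refl (C : Matrix (Fin l) (Fin l) ℤ) (a : Fin l → ℤ) : SubLE C a a :=
  ⟨0, by simp⟩

lemma subLE_of_diff_eq {a b c d x y : Fin l → ℤ} (h1 : SubLE C a b) (h2 : SubLE C c d)
    (h : y - x = (b - a) + (d - c)) : SubLE C x y := by
  obtain ⟨k1, hk1⟩ := h1
  obtain ⟨k2, hk2⟩ := h2
  refine ⟨k1 + k2, ?_⟩
  rw [h, hk1, hk2, ← Finset.sum_add_distrib]
  refine Finset.sum_congr rfl fun j _ => ?_
  simp only [Pi.add_apply, Nat.cast_add, add_smul]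

lemma subLE_trans {a b c : Fin l → ℤ} (h1 : SubLE C a b) (h2 : SubLE C b c) :
    SubLE C a c :=
  subLE_of_diff_eq h1 h2 (by abel)

/-- "Pointedness" of the cone spanned by the simple roots; proved later from
Weyl invariance of the family `f`. -/
def PtCone {l : ℕ} (C : Matrix (Fin l) (Fin l) ℤ) : Prop :=
  ∀ k : Fin l → ℕ, (∑ j, (k j : ℤ) • alphaW C j) = 0 → ∀ j, k j ≠ 0 → alphaW C j = 0

lemma PtCone.zero_of_sum (hpt : PtCone C) (k : Fin l → ℕ)
    (hk : (∑ j, (k j : ℤ) • alphaW C j) = 0) : ∀ k' : Fin l → ℕ,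
    (∀ j, k' j ≠ 0 → k j ≠ 0) → (∑ j, (k' j : ℤ) • alphaW C j) = 0 := by
  intro k' hk'
  refine Finset.sum_eq_zero fun j _ => ?_
  by_cases h : k' j = 0
  · simp [h]
  · rw [hpt k hk j (hk' j h), smul_zero]

lemma PtCone.cancel (hpt : PtCone C) {a b c d : Fin l → ℤ}
    (h1 : SubLE C a b) (h2 : SubLE C c d) (h : (b - a) + (d - c) = 0) :
    b = a ∧ d = c := by
  obtain ⟨k1, hk1⟩ := h1
  obtain ⟨k2, hk2⟩ := h2
  have hsum : (∑ j, ((k1 + k2) j : ℤ) • alphaW C j) = 0 := by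
    rw [show (∑ j, ((k1 + k2) j : ℤ) • alphaW C j)
        = (∑ j, (k1 j : ℤ) • alphaW C j) + (∑ j, (k2 j : ℤ) • alphaW C j) from ?_,
      ← hk1, ← hk2, h]
    rw [← Finset.sum_add_distrib]
    refine Finset.sum_congr rfl fun j _ => ?_
    simp only [Pi.add_apply, Nat.cast_add, add_smul]
  constructor
  · have : b - a = 0 := by
      rw [hk1]
      exact hpt.zero_of_sum _ hsum k1 (fun j hj => by simp [Pi.add_apply]; omega)
    have := sub_eq_zero.mp this; exact this
  · have : d - c = 0 := by
      rw [hk2]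
      exact hpt.zero_of_sum _ hsum k2 (fun j hj => by simp [Pi.add_apply]; omega)
    exact sub_eq_zero.mp this

lemma PtCone.antisymm (hpt : PtCone C) {a b : Fin l → ℤ}
    (h1 : SubLE C a b) (h2 : SubLE C b a) : a = b :=
  ((hpt.cancel h1 h2 (by abel)).1).symm

lemma exists_subLE_max (hpt : PtCone C) (T : Finset (Fin l → ℤ)) (hT : T.Nonempty) :
    ∃ m ∈ T, ∀ b ∈ T, SubLE C m b → b = m := by
  classical
  induction T using Finset.strongInduction with
  | _ T IH =>
    obtain ⟨a, ha⟩ := hT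
    set T' := T.filter (fun b => SubLE C a b ∧ b ≠ a) with hT'def
    by_cases hT' : T'.Nonempty
    · have hss : T' ⊂ T := by
        refine Finset.ssubset_iff_of_subset (Finset.filter_subset _ _) |>.2 ?_
        exact ⟨a, ha, by simp [hT'def]⟩
      obtain ⟨m, hmT', hmax⟩ := IH T' hss hT'
      obtain ⟨hmT, ham, hma⟩ := Finset.mem_filter.1 hmT' |>.imp id fun h => h
      refine ⟨m, hmT, fun b hb hmb => ?_⟩
      by_cases hba : b = a
      · subst hba
        exact absurd (hpt.antisymm ham hmb).symm hma
      · exact hmax b (Finset.mem_filter.2 ⟨hb, subLE_trans ham hmb, hba⟩) hmb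
    · refine ⟨a, ha, fun b hb hab => ?_⟩
      by_contra hne
      exact hT' ⟨b, Finset.mem_filter.2 ⟨hb, hab, hne⟩⟩

end Aux

section Mul

variable {l : ℕ}

lemma mul_coeff_ext (p q : AddMonoidAlgebra ℤ (Fin l → ℤ)) (x : Fin l → ℤ)
    (U V : Finset (Fin l → ℤ)) (hU : p.coeff.support ⊆ U) (hV : q.coeff.support ⊆ V) :
    (p * q).coeff x = ∑ y ∈ U, ∑ z ∈ V, if y + z = x then p.coeff y * q.coeff z else 0 := by
  classical
  rw [AddMonoidAlgebra.coeff_mul]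
  rw [Finsupp.sum]
  rw [Finset.sum_subset hU ?_]
  · refine Finset.sum_congr rfl fun y _ => ?_
    rw [Finsupp.sum]
    rw [Finset.sum_subset hV ?_]
    intro z _ hz
    rw [Finsupp.notMem_support_iff.1 hz, mul_zero, ite_self]
  · intro y _ hy
    rw [Finsupp.notMem_support_iff.1 hy]
    simp [Finsupp.sum]

lemma mul_coeff_congr (p q p' q' : AddMonoidAlgebra ℤ (Fin l → ℤ)) (x : Fin l → ℤ)
    (h : ∀ y z, y + z = x → p.coeff y * q.coeff z = p'.coeff y * q'.coeff z) :
    (p * q).coeff x = (p' * q').coeff x := by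
  classical
  rw [mul_coeff_ext p q x (p.coeff.support ∪ p'.coeff.support) (q.coeff.support ∪ q'.coeff.support)
    Finset.subset_union_left Finset.subset_union_left,
    mul_coeff_ext p' q' x (p.coeff.support ∪ p'.coeff.support) (q.coeff.support ∪ q'.coeff.support)
    Finset.subset_union_right Finset.subset_union_right]
  refine Finset.sum_congr rfl fun y _ => Finset.sum_congr rfl fun z _ => ?_
  by_cases hyz : y + z = x
  · rw [if_pos hyz, if_pos hyz, h y z hyz]
  · rw [if_neg hyz, if_neg hyz]

end Mul

section Dyn

variable {l : ℕ}

lemma fixed_support_image {T : (Fin l → ℤ) → (Fin l → ℤ)} {g : (Fin l → ℤ) →₀ ℤ}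
    (h : Finsupp.mapDomain T g = g) :
    g.support.image T = g.support ∧ Set.InjOn T ↑g.support := by
  classical
  have h1 : g.support ⊆ g.support.image T := by
    conv_lhs => rw [← h]
    exact Finsupp.mapDomain_support
  have h3 : g.support = g.support.image T :=
    Finset.eq_of_subset_of_card_le h1 Finset.card_image_le
  exact ⟨h3.symm, Finset.injOn_of_card_image_eq (by rw [← h3])⟩

lemma exists_iterate_fixed {T : (Fin l → ℤ) → (Fin l → ℤ)}
    {g : (Fin l → ℤ) →₀ ℤ} (h : Finsupp.mapDomain T g = g)
    {x : Fin l → ℤ} (hx : x ∈ g.support) : ∃ p, 0 < p ∧ T^[p] x = x := by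
  classical
  obtain ⟨himg, hinj⟩ := fixed_support_image h
  have hmem : ∀ y ∈ g.support, T y ∈ g.support := fun y hy =>
    himg ▸ Finset.mem_image_of_mem T hy
  have hiter : ∀ n y, y ∈ g.support → T^[n] y ∈ g.support := by
    intro n
    induction n with
    | zero => simpa using fun y hy => hy
    | succ n ih =>
      intro y hy
      rw [Function.iterate_succ_apply']
      exact hmem _ (ih y hy)
  have cancel : ∀ n (u v : Fin l → ℤ), u ∈ g.support → v ∈ g.support →
      T^[n] u = T^[n] v → u = v := by
    intro n
    induction n with
    | zero => simpa using fun _ _ _ _ h => h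
    | succ n ih =>
      intro u v hu hv he
      rw [Function.iterate_succ_apply', Function.iterate_succ_apply'] at he
      exact ih u v hu hv (hinj (hiter n u hu) (hiter n v hv) he)
  have key : ∀ a b : ℕ, a < b → T^[a] x = T^[b] x → ∃ p, 0 < p ∧ T^[p] x = x := by
    intro a b hab he
    have hb : T^[b] x = T^[a] (T^[b - a] x) := by
      rw [← Function.iterate_add_apply]
      congr 1
      omega
    rw [hb] at he
    have := cancel a x (T^[b - a] x) hx (hiter _ x hx) he
    exact ⟨b - a, by omega, this.symm⟩
  obtain ⟨a, b, hne, he⟩ := Finite.exists_ne_map_eq_of_infinite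
    (fun n : ℕ => (⟨T^[n] x, hiter n x hx⟩ : {y // y ∈ g.support}))
  have he' : T^[a] x = T^[b] x := by simpa using congrArg Subtype.val he
  rcases hne.lt_or_gt with hab | hab
  · exact key a b hab he'
  · exact key b a hab he'.symm

end Dyn

section Weyl

variable {l : ℕ}

/-- canonical basis vector -/
def deltaB (l : ℕ) (i : Fin l) : Fin l → ℤ := fun j => if i = j then 1 else 0

lemma deltaB_dominant (i : Fin l) : IsDominant (deltaB l i) := by
  intro j
  unfold deltaB
  split <;> omega

lemma end_ext {w w' : AddMonoid.End (Fin l → ℤ)}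
    (h : ∀ i, w (deltaB l i) = w' (deltaB l i)) : w = w' := by
  refine AddMonoidHom.ext fun v => ?_
  have hv : v = ∑ i, v i • deltaB l i := by
    exact pi_eq_sum_univ v
  show w v = w' v
  rw [hv, map_sum (w : ((Fin l → ℤ) →+ (Fin l → ℤ))), map_sum (w' : ((Fin l → ℤ) →+ (Fin l → ℤ)))]
  exact Finset.sum_congr rfl fun i _ => by
    rw [map_zsmul (w : ((Fin l → ℤ) →+ (Fin l → ℤ))), map_zsmul (w' : ((Fin l → ℤ) →+ (Fin l → ℤ))), h i]

variable (C : Matrix (Fin l) (Fin l) ℤ)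
variable (f : (Fin l → ℤ) → AddMonoidAlgebra ℤ (Fin l → ℤ))

lemma closure_inv (hf_inv : ∀ lam, IsDominant lam → WInvariant C (f lam))
    {w : AddMonoid.End (Fin l → ℤ)}
    (hw : w ∈ Submonoid.closure (Set.range (srefW C)))
    (lam : Fin l → ℤ) (hdom : IsDominant lam) :
    Finsupp.mapDomain ⇑w (f lam).coeff = (f lam).coeff := by
  induction hw using Submonoid.closure_induction with
  | mem x hx =>
    obtain ⟨i, rfl⟩ := hx
    exact hf_inv lam hdom i
  | one =>
    have : ⇑(1 : AddMonoid.End (Fin l → ℤ)) = id := rfl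
    rw [this, Finsupp.mapDomain_id]
  | mul x y hx hy ihx ihy =>
    have : ⇑(x * y) = ⇑x ∘ ⇑y := rfl
    rw [this, Finsupp.mapDomain_comp, ihy, ihx]

variable (hf_inv : ∀ lam, IsDominant lam → WInvariant C (f lam))
    (hf_lead : ∀ lam, IsDominant lam → (f lam).coeff lam = 1)

include hf_inv hf_lead in
lemma weyl_torsion {w : AddMonoid.End (Fin l → ℤ)}
    (hw : w ∈ Submonoid.closure (Set.range (srefW C))) :
    ∃ P, 0 < P ∧ w ^ P = 1 := by
  have hmem : ∀ i : Fin l, deltaB l i ∈ (f (deltaB l i)).coeff.support := fun i =>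
    Finsupp.mem_support_iff.2 (by rw [hf_lead _ (deltaB_dominant i)]; exact one_ne_zero)
  have hper : ∀ i : Fin l, ∃ p, 0 < p ∧ (⇑w)^[p] (deltaB l i) = deltaB l i := fun i =>
    exists_iterate_fixed (closure_inv C f hf_inv hw (deltaB l i) (deltaB_dominant i))
      (hmem i)
  choose p hp hfix using hper
  have hpow : ∀ (n : ℕ) (v : Fin l → ℤ), (w ^ n) v = (⇑w)^[n] v := by
    intro n
    induction n with
    | zero => intro v; rfl
    | succ n ih =>
      intro v
      rw [pow_succ]
      show (w ^ n) (w v) = _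
      rw [ih, Function.iterate_succ_apply]
  refine ⟨∏ i, p i, Finset.prod_pos (fun i _ => hp i), end_ext fun i => ?_⟩
  rw [hpow]
  obtain ⟨m, hm⟩ := Finset.dvd_prod_of_mem p (Finset.mem_univ i)
  rw [hm, Function.iterate_mul]
  show ((⇑w)^[p i])^[m] (deltaB l i) = (1 : AddMonoid.End (Fin l → ℤ)) (deltaB l i)
  rw [Function.iterate_fixed (hfix i) m]
  rfl

include hf_inv hf_lead in
lemma weyl_finite :
    {w : AddMonoid.End (Fin l → ℤ) | w ∈ Submonoid.closure (Set.range (srefW C))}.Finite := by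
  classical
  have hS : (Set.univ.pi fun i : Fin l =>
      ((f (deltaB l i)).coeff.support : Set (Fin l → ℤ))).Finite :=
    Set.Finite.pi (fun i => (f (deltaB l i)).coeff.support.finite_toSet)
  apply Set.Finite.of_finite_image
    (f := fun w : AddMonoid.End (Fin l → ℤ) => fun i => w (deltaB l i))
  · apply hS.subset
    rintro _ ⟨w, hw, rfl⟩
    intro i _
    have h := closure_inv C f hf_inv hw (deltaB l i) (deltaB_dominant i)
    have himg := (fixed_support_image h).1
    have hmem : deltaB l i ∈ (f (deltaB l i)).coeff.support :=
      Finsupp.mem_support_iff.2 (by rw [hf_lead _ (deltaB_dominant i)]; exact one_ne_zero)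
    have : w (deltaB l i) ∈ (f (deltaB l i)).coeff.support.image ⇑w :=
      Finset.mem_image_of_mem _ hmem
    rw [himg] at this
    exact this
  · intro w hw w' hw' he
    exact end_ext (fun i => congrFun he i)

end Weyl

section Form

variable {l : ℕ} (C : Matrix (Fin l) (Fin l) ℤ)
variable (f : (Fin l → ℤ) → AddMonoidAlgebra ℤ (Fin l → ℤ))

include f in
theorem ptCone_of_inv (hf_inv : ∀ lam, IsDominant lam → WInvariant C (f lam))
    (hf_lead : ∀ lam, IsDominant lam → (f lam).coeff lam = 1) : PtCone C := by
  classical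
  -- the Weyl monoid is finite
  have hWfin := weyl_finite C f hf_inv hf_lead
  set WF : Finset (AddMonoid.End (Fin l → ℤ)) := hWfin.toFinset with hWFdef
  have hmemWF : ∀ w, w ∈ WF ↔ w ∈ Submonoid.closure (Set.range (srefW C)) := fun w =>
    hWfin.mem_toFinset
  have h1W : (1 : AddMonoid.End (Fin l → ℤ)) ∈ WF := (hmemWF 1).2 (one_mem _)
  have hsW : ∀ i, srefW C i ∈ WF := fun i =>
    (hmemWF _).2 (Submonoid.subset_closure (Set.mem_range_self i))
  have hmulW : ∀ w w', w ∈ WF → w' ∈ WF → w * w' ∈ WF := fun w w' hw hw' =>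
    (hmemWF _).2 (mul_mem ((hmemWF _).1 hw) ((hmemWF _).1 hw'))
  -- the averaged bilinear form
  set B : (Fin l → ℤ) → (Fin l → ℤ) → ℤ :=
    fun x y => ∑ w ∈ WF, ∑ i, (w x) i * (w y) i with hBdef
  have hBadd_r : ∀ x y z, B x (y + z) = B x y + B x z := by
    intro x y z
    simp only [hBdef, map_add, Pi.add_apply, mul_add, Finset.sum_add_distrib]
  have hBzero_r : ∀ x, B x 0 = 0 := by
    intro x
    simp [hBdef]
  have hBsmul_r : ∀ (c : ℤ) x y, B x (c • y) = c * B x y := by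
    intro c x y
    simp only [hBdef, map_zsmul, Pi.smul_apply, smul_eq_mul, Finset.mul_sum]
    exact Finset.sum_congr rfl fun w _ => Finset.sum_congr rfl fun i _ => by ring
  have hBsymm : ∀ x y, B x y = B y x := by
    intro x y
    exact Finset.sum_congr rfl fun w _ => Finset.sum_congr rfl fun i _ => mul_comm _ _
  have hBneg_r : ∀ x y, B x (-y) = -B x y := by
    intro x y
    rw [show -y = (-1 : ℤ) • y by rw [neg_one_smul], hBsmul_r, neg_one_mul]
  have hBsub_l : ∀ x y z, B (x - y) z = B x z - B y z := by
    intro x y z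
    rw [hBsymm, hBsymm x z, hBsymm y z, sub_eq_add_neg, hBadd_r, hBneg_r]
    ring
  have hBsmul_l : ∀ (c : ℤ) x y, B (c • x) y = c * B x y := by
    intro c x y
    rw [hBsymm, hBsmul_r, hBsymm]
  have hBpos : ∀ x, x ≠ 0 → 0 < B x x := by
    intro x hx
    have hterm : ∀ w ∈ WF, (0:ℤ) ≤ ∑ i, (w x) i * (w x) i := fun w _ =>
      Finset.sum_nonneg fun i _ => mul_self_nonneg _
    have hx0 : ∃ i0, x i0 ≠ 0 := by
      by_contra h
      push_neg at h
      exact hx (funext h)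
    obtain ⟨i0, hi0⟩ := hx0
    have h1 : (0:ℤ) < ∑ i, ((1 : AddMonoid.End (Fin l → ℤ)) x) i *
        ((1 : AddMonoid.End (Fin l → ℤ)) x) i := by
      refine Finset.sum_pos' (fun i _ => mul_self_nonneg _) ⟨i0, Finset.mem_univ i0, ?_⟩
      have : (1 : AddMonoid.End (Fin l → ℤ)) x = x := rfl
      rw [this]
      exact mul_self_pos.mpr hi0
    calc (0:ℤ) < _ := h1
      _ ≤ B x x := Finset.single_le_sum hterm h1W
  -- invariance under the simple reflections
  have hBinv : ∀ (i : Fin l) x y, B (srefW C i x) (srefW C i y) = B x y := by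
    intro i x y
    obtain ⟨P, hP, hsP⟩ := weyl_torsion C f hf_inv hf_lead
      (Submonoid.subset_closure (Set.mem_range_self i))
    set s := srefW C i
    set sInv := s ^ (P - 1) with hsInvdef
    have hss : s * sInv = 1 := by
      rw [hsInvdef, ← pow_succ']
      rw [show P - 1 + 1 = P by omega, hsP]
    have hss' : sInv * s = 1 := by
      rw [hsInvdef, ← pow_succ]
      rw [show P - 1 + 1 = P by omega, hsP]
    have hsInvW : sInv ∈ WF := by
      rw [hmemWF]
      exact pow_mem (Submonoid.subset_closure (Set.mem_range_self i)) _
    refine Finset.sum_nbij' (fun w => w * s) (fun w => w * sInv) ?_ ?_ ?_ ?_ ?_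
    · intro w hw
      exact hmulW _ _ hw (hsW i)
    · intro w hw
      exact hmulW _ _ hw hsInvW
    · intro w _
      show w * s * sInv = w
      rw [mul_assoc, hss, mul_one]
    · intro w _
      show w * sInv * s = w
      rw [mul_assoc, hss', mul_one]
    · intro w _
      rfl
  -- diagonal entries of active roots
  have hdiag : ∀ i, alphaW C i ≠ 0 → C i i = 2 := by
    intro i hαi
    obtain ⟨P, hP, hsP⟩ := weyl_torsion C f hf_inv hf_lead
      (Submonoid.subset_closure (Set.mem_range_self i))
    set s := srefW C i
    set c := C i i with hcdef
    have hαii : alphaW C i i = c := rfl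
    have hsapp : ∀ v, s v = v - v i • alphaW C i := fun v => rfl
    have hclaim1 : ∀ n, (s ^ n) (alphaW C i) = (1 - c) ^ n • alphaW C i := by
      intro n
      induction n with
      | zero => rw [pow_zero, pow_zero, one_smul]; rfl
      | succ n ih =>
        rw [pow_succ]
        show (s ^ n) (s (alphaW C i)) = _
        have : s (alphaW C i) = (1 - c) • alphaW C i := by
          rw [hsapp, hαii, sub_smul, one_smul]
        rw [this, map_zsmul ((s ^ n) : ((Fin l → ℤ) →+ (Fin l → ℤ))), ih, smul_smul, ← pow_succ']
    have hclaim2 : ∀ n v, (s ^ n) v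
        = v - ((∑ m ∈ Finset.range n, (1 - c) ^ m) * v i) • alphaW C i := by
      intro n
      induction n with
      | zero =>
        intro v
        rw [pow_zero]
        show v = _
        simp
      | succ n ih =>
        intro v
        rw [pow_succ]
        show (s ^ n) (s v) = _
        rw [ih (s v)]
        have hsvi : (s v) i = (1 - c) * v i := by
          rw [hsapp]
          show v i - v i * alphaW C i i = _
          rw [hαii]; ring
        rw [hsvi, hsapp v, sub_sub, ← add_smul]
        congr 2
        rw [geom_sum_succ]
        ring
    have hσ : (∑ m ∈ Finset.range P, (1 - c) ^ m) = 0 := by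
      have := hclaim2 P (deltaB l i)
      rw [hsP] at this
      have h1 : (1 : AddMonoid.End (Fin l → ℤ)) (deltaB l i) = deltaB l i := rfl
      rw [h1] at this
      have hδi : deltaB l i i = 1 := by simp [deltaB]
      rw [hδi, mul_one] at this
      have h2 : (∑ m ∈ Finset.range P, (1 - c) ^ m) • alphaW C i = 0 := by
        have := sub_eq_self.mp this.symm
        exact this
      by_contra hne
      obtain ⟨m0, hm0⟩ : ∃ m0, alphaW C i m0 ≠ 0 := by
        by_contra hz
        push_neg at hz
        exact hαi (funext hz)
      have := congrFun h2 m0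
      simp only [Pi.smul_apply, smul_eq_mul, Pi.zero_apply] at this
      exact hm0 (by
        rcases mul_eq_zero.mp this with h | h
        · exact absurd h hne
        · exact h)
    by_contra hc2
    set r := 1 - c with hrdef
    have hr : r ≠ -1 := by omega
    rcases (show r = 0 ∨ 1 ≤ r ∨ r ≤ -2 by omega) with h0 | h1 | h2
    · rw [h0] at hσ
      have : ∀ m ∈ Finset.range P, (0:ℤ) ^ m = if m = 0 then 1 else 0 := by
        intro m _
        rcases Nat.eq_zero_or_pos m with rfl | hm
        · simp
        · rw [zero_pow (by omega), if_neg (by omega)]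
      rw [Finset.sum_congr rfl this, Finset.sum_ite_eq' (Finset.range P) 0 (fun _ => (1:ℤ)),
        if_pos (Finset.mem_range.2 hP)] at hσ
      exact one_ne_zero hσ
    · have : (0:ℤ) < ∑ m ∈ Finset.range P, r ^ m :=
        Finset.sum_pos (fun m _ => pow_pos (by omega) m) (by
          exact ⟨0, Finset.mem_range.2 hP⟩)
      omega
    · have habs : ∀ n : ℕ, 1 ≤ |∑ m ∈ Finset.range (n + 1), r ^ m| := by
        intro n
        induction n with
        | zero => simp
        | succ n ih =>
          set σ := ∑ m ∈ Finset.range (n + 1), r ^ m with hσdef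
          have hgs : (∑ m ∈ Finset.range (n + 2), r ^ m) = r * σ + 1 := by
            rw [geom_sum_succ]
          rw [hgs]
          have habs2 : |r * σ| = |r| * |σ| := abs_mul r σ
          have hrabs : 2 ≤ |r| := by
            rw [abs_of_nonpos (by omega)]
            omega
          have h3 : |r * σ| ≤ |r * σ + 1| + 1 := by
            calc |r * σ| = |(r * σ + 1) + (-1)| := by ring_nf
              _ ≤ |r * σ + 1| + |(-1 : ℤ)| := abs_add_le _ _
              _ = |r * σ + 1| + 1 := by norm_num
          have h4 : 2 ≤ |r * σ| := by
            calc (2:ℤ) = 2 * 1 := by ring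
              _ ≤ |r| * |σ| := by
                exact mul_le_mul hrabs ih (by norm_num) (by positivity)
              _ = |r * σ| := habs2.symm
          omega
      have := habs (P - 1)
      rw [show P - 1 + 1 = P by omega, hσ] at this
      simp at this
  -- the key identity
  have hkey : ∀ (j : Fin l) v, 2 * B v (alphaW C j)
      = v j * B (alphaW C j) (alphaW C j) := by
    intro j v
    by_cases hαj : alphaW C j = 0
    · rw [hαj, hBzero_r, hBzero_r, mul_zero, mul_zero]
    · have hc := hdiag j hαj
      have hsα : srefW C j (alphaW C j) = -(alphaW C j) := by
        show alphaW C j - alphaW C j j • alphaW C j = _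
        have : alphaW C j j = 2 := hc
        rw [this, two_smul]
        abel
      have hsv : srefW C j v = v - v j • alphaW C j := rfl
      have e0 : B v (alphaW C j) = B (srefW C j v) (srefW C j (alphaW C j)) :=
        (hBinv j v (alphaW C j)).symm
      rw [hsα, hsv, hBneg_r, hBsub_l, hBsmul_l] at e0
      linarith [e0]
  -- conclude pointedness
  intro k hk j0 hkj0
  by_contra hα
  have hBsum_r : ∀ (g : Fin l → (Fin l → ℤ)) x,
      B x (∑ j, g j) = ∑ j, B x (g j) := by
    intro g x
    induction (Finset.univ : Finset (Fin l)) using Finset.cons_induction with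
    | empty => simpa using hBzero_r x
    | cons a s ha ih => rw [Finset.sum_cons, Finset.sum_cons, hBadd_r, ih]
  have e : 2 * B (deltaB l j0) (∑ j, (k j : ℤ) • alphaW C j) = 0 := by
    rw [hk, hBzero_r, mul_zero]
  rw [hBsum_r, Finset.mul_sum] at e
  have e2 : ∀ j ∈ Finset.univ, 2 * B (deltaB l j0) ((k j : ℤ) • alphaW C j)
      = (k j : ℤ) * ((deltaB l j0) j * B (alphaW C j) (alphaW C j)) := by
    intro j _
    rw [hBsmul_r]
    rw [show 2 * ((k j : ℤ) * B (deltaB l j0) (alphaW C j))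
      = (k j : ℤ) * (2 * B (deltaB l j0) (alphaW C j)) by ring, hkey]
  rw [Finset.sum_congr rfl e2] at e
  have e3 : ∀ j ∈ Finset.univ, j ≠ j0 →
      (k j : ℤ) * ((deltaB l j0) j * B (alphaW C j) (alphaW C j)) = 0 := by
    intro j _ hj
    have : (deltaB l j0) j = 0 := by
      simp [deltaB, (Ne.symm hj : j0 ≠ j)]
    rw [this, zero_mul, mul_zero]
  rw [Finset.sum_eq_single j0 e3 (fun h => absurd (Finset.mem_univ j0) h)] at e
  have hδ : (deltaB l j0) j0 = 1 := by simp [deltaB]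
  rw [hδ, one_mul] at e
  have hpos : 0 < (k j0 : ℤ) * B (alphaW C j0) (alphaW C j0) :=
    mul_pos (by exact_mod_cast Nat.pos_of_ne_zero hkj0) (hBpos _ hα)
  omega

end Form


/-- **Recursion lemma.** Let `λ = μ + ν` with `μ, ν` nonzero dominant weights, and let `t`
be dominant.  For a family `f` as in the rigidity theorem (supported on `Π(λ)`, leading
coefficient `1`, `W`-invariant), with structure constants `N` defined by
`f_μ · f_ν = Σ_λ N_{μ,ν}^λ f_λ`, the difference `n_λ(t) − n_{μ,ν}^t` is a universal
expression `g` in the values `n_μ(y), n_ν(z), n_s(x)` for `s ⪯ λ` dominant and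
`μ − y ⪯ λ − t`, `ν − z ⪯ λ − t`, `s − x ⪨ λ − t`.  This is formalized by comparing two
such families `f, N` and `f', N'` over the same root system: if they agree on all those
values, then `n_λ(t) − n_{μ,ν}^t = n'_λ(t) − n'_{μ,ν}^t`; in particular, taking
`f' = ch`, `N' = c`, if all the smaller values agree with the multiplicities `m` and
`n_{μ,ν}^t = c_{μ,ν}^t`, then `n_λ(t) = m_λ(t)`. -/
theorem recursion_lemma {l : ℕ} (C : Matrix (Fin l) (Fin l) ℤ)
    (f f' : (Fin l → ℤ) → AddMonoidAlgebra ℤ (Fin l → ℤ))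
    (N N' : (Fin l → ℤ) → (Fin l → ℤ) → (Fin l → ℤ) → ℤ)
    -- axioms for the family `f, N`:
    (hf_inv : ∀ lam, IsDominant lam → WInvariant C (f lam))
    (hf_lead : ∀ lam, IsDominant lam → (f lam).coeff lam = 1)
    (hf_supp : ∀ lam x, IsDominant lam → (f lam).coeff x ≠ 0 → SubLE C x lam)
    (hN_finite : ∀ μ ν, (Function.support (N μ ν)).Finite)
    (hN_dom : ∀ μ ν lam, N μ ν lam ≠ 0 → IsDominant lam ∧ SubLE C lam (μ + ν))
    (hN_spec : ∀ μ ν, IsDominant μ → IsDominant ν →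
      f μ * f ν = ∑ᶠ lam, N μ ν lam • f lam)
    -- axioms for the family `f', N'`:
    (hf'_inv : ∀ lam, IsDominant lam → WInvariant C (f' lam))
    (hf'_lead : ∀ lam, IsDominant lam → (f' lam).coeff lam = 1)
    (hf'_supp : ∀ lam x, IsDominant lam → (f' lam).coeff x ≠ 0 → SubLE C x lam)
    (hN'_finite : ∀ μ ν, (Function.support (N' μ ν)).Finite)
    (hN'_dom : ∀ μ ν lam, N' μ ν lam ≠ 0 → IsDominant lam ∧ SubLE C lam (μ + ν))
    (hN'_spec : ∀ μ ν, IsDominant μ → IsDominant ν →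
      f' μ * f' ν = ∑ᶠ lam, N' μ ν lam • f' lam)
    -- the decomposition `λ = μ + ν` and the weight `t`:
    (μ ν t : Fin l → ℤ) (hμ : IsDominant μ) (hν : IsDominant ν)
    (hμ0 : μ ≠ 0) (hν0 : ν ≠ 0) (ht : IsDominant t)
    -- agreement of the two families on the "smaller" values:
    (hμy : ∀ y, SubLE C (μ - y) (μ + ν - t) → (f μ).coeff y = (f' μ).coeff y)
    (hνz : ∀ z, SubLE C (ν - z) (μ + ν - t) → (f ν).coeff z = (f' ν).coeff z)
    (hsx : ∀ s x, IsDominant s → SubLE C s (μ + ν) →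
      SubLE C (s - x) (μ + ν - t) → s - x ≠ μ + ν - t → (f s).coeff x = (f' s).coeff x)
    (hNt : N μ ν t = N' μ ν t) :
    (f (μ + ν)).coeff t - N μ ν t = (f' (μ + ν)).coeff t - N' μ ν t := by
  classical
  have hpt : PtCone C := ptCone_of_inv C f hf_inv hf_lead
  have hdomlam : IsDominant (μ + ν) := fun i => by
    have := hμ i; have := hν i
    simp only [Pi.add_apply]
    omega
  have hSfin := (hN_finite μ ν).union (hN'_finite μ ν)
  set S : Finset (Fin l → ℤ) := hSfin.toFinset with hSdef
  have hmemS : ∀ s, s ∈ S ↔ (N μ ν s ≠ 0 ∨ N' μ ν s ≠ 0) := by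
    intro s
    rw [hSdef, Set.Finite.mem_toFinset]
    simp [Function.mem_support]
  have hEQ : ∀ x, (f μ * f ν).coeff x = ∑ s ∈ S, N μ ν s * (f s).coeff x := by
    intro x
    rw [hN_spec μ ν hμ hν,
      finsum_eq_sum_of_support_subset _
        (?_ : Function.support (fun s => N μ ν s • f s) ⊆ ↑S),
      AddMonoidAlgebra.coeff_sum, Finset.sum_apply']
    · exact Finset.sum_congr rfl fun s _ => by rw [AddMonoidAlgebra.coeff_smul, Finsupp.smul_apply, smul_eq_mul]
    · intro s hs
      have : N μ ν s ≠ 0 := by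
        intro h
        apply hs
        show N μ ν s • f s = 0
        rw [h, zero_smul]
      exact (hmemS s).2 (Or.inl this)
  have hEQ' : ∀ x, (f' μ * f' ν).coeff x = ∑ s ∈ S, N' μ ν s * (f' s).coeff x := by
    intro x
    rw [hN'_spec μ ν hμ hν,
      finsum_eq_sum_of_support_subset _
        (?_ : Function.support (fun s => N' μ ν s • f' s) ⊆ ↑S),
      AddMonoidAlgebra.coeff_sum, Finset.sum_apply']
    · exact Finset.sum_congr rfl fun s _ => by rw [AddMonoidAlgebra.coeff_smul, Finsupp.smul_apply, smul_eq_mul]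
    · intro s hs
      have : N' μ ν s ≠ 0 := by
        intro h
        apply hs
        show N' μ ν s • f' s = 0
        rw [h, zero_smul]
      exact (hmemS s).2 (Or.inr this)
  -- Step A: the products agree at every `x ⪰ t`
  have hprodeq : ∀ x, SubLE C t x → (f μ * f ν).coeff x = (f' μ * f' ν).coeff x := by
    intro x htx
    apply mul_coeff_congr
    intro y z hyz
    by_cases hy1 : (f' μ).coeff y ≠ 0 ∧ (f' ν).coeff z ≠ 0
    · have h1 := hf'_supp μ y hμ hy1.1
      have h2 := hf'_supp ν z hν hy1.2
      rw [hμy y (subLE_of_diff_eq h2 htx (by rw [← hyz]; abel)),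
        hνz z (subLE_of_diff_eq h1 htx (by rw [← hyz]; abel))]
    · by_cases hy2 : (f μ).coeff y ≠ 0 ∧ (f ν).coeff z ≠ 0
      · have h1 := hf_supp μ y hμ hy2.1
        have h2 := hf_supp ν z hν hy2.2
        have e1 := hμy y (subLE_of_diff_eq h2 htx (by rw [← hyz]; abel))
        have e2 := hνz z (subLE_of_diff_eq h1 htx (by rw [← hyz]; abel))
        exact absurd ⟨e1 ▸ hy2.1, e2 ▸ hy2.2⟩ hy1
      · push_neg at hy1 hy2
        rcases eq_or_ne ((f μ).coeff y) 0 with h | h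
        · rw [h, zero_mul]
          rcases eq_or_ne ((f' μ).coeff y) 0 with h' | h'
          · rw [h', zero_mul]
          · rw [hy1 h', mul_zero]
        · rw [hy2 h, mul_zero]
          rcases eq_or_ne ((f' μ).coeff y) 0 with h' | h'
          · rw [h', zero_mul]
          · rw [hy1 h', mul_zero]
  -- Step B: the structure constants agree strictly between `t` and `μ + ν`
  have hNagree : ∀ s, SubLE C t s → s ≠ t → N μ ν s = N' μ ν s := by
    intro s₀ hts₀ hst₀
    by_contra hne₀
    have hs₀S : s₀ ∈ S := by
      rcases eq_or_ne (N μ ν s₀) 0 with h1 | h1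
      · rcases eq_or_ne (N' μ ν s₀) 0 with h2 | h2
        · exact absurd (h1.trans h2.symm) hne₀
        · exact (hmemS s₀).2 (Or.inr h2)
      · exact (hmemS s₀).2 (Or.inl h1)
    set T := S.filter (fun s => SubLE C t s ∧ s ≠ t ∧ N μ ν s ≠ N' μ ν s) with hTdef
    have hTne : T.Nonempty := ⟨s₀, Finset.mem_filter.2 ⟨hs₀S, hts₀, hst₀, hne₀⟩⟩
    obtain ⟨m, hmT, hmax⟩ := exists_subLE_max hpt T hTne
    obtain ⟨hmS, htm, hmt, hNm⟩ :
        m ∈ S ∧ SubLE C t m ∧ m ≠ t ∧ N μ ν m ≠ N' μ ν m := by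
      have := Finset.mem_filter.1 hmT
      exact ⟨this.1, this.2.1, this.2.2.1, this.2.2.2⟩
    have hmdom : IsDominant m ∧ SubLE C m (μ + ν) := by
      rcases eq_or_ne (N μ ν m) 0 with h1 | h1
      · exact hN'_dom μ ν m (fun h2 => hNm (h1.trans h2.symm))
      · exact hN_dom μ ν m h1
    have he := (hEQ m).symm.trans ((hprodeq m htm).trans (hEQ' m))
    have hterm : ∀ s ∈ S, s ≠ m → N μ ν s * (f s).coeff m = N' μ ν s * (f' s).coeff m := by
      intro s hsS hsm
      rcases eq_or_ne (N μ ν s) 0 with h1 | h1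
      · rcases eq_or_ne (N' μ ν s) 0 with h2 | h2
        · rw [h1, h2, zero_mul, zero_mul]
        · -- N' s ≠ 0
          have hd := hN'_dom μ ν s h2
          by_cases hms : SubLE C m s
          · have hts' : SubLE C t s := subLE_trans htm hms
            have hNs : N μ ν s = N' μ ν s := by
              by_cases hst' : s = t
              · rw [hst']; exact hNt
              · by_contra hne
                exact hsm (hmax s (Finset.mem_filter.2 ⟨hsS, hts', hst', hne⟩) hms)
            have hfs : (f s).coeff m = (f' s).coeff m := by
              refine hsx s m hd.1 hd.2 (subLE_of_diff_eq hd.2 htm (by abel)) ?_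
              intro hEqd
              have h0 : ((μ + ν) - s) + (m - t) = 0 := by
                rw [show ((μ + ν) - s) + (m - t) = (μ + ν - t) - (s - m) by abel,
                  ← hEqd, sub_self]
              exact hmt (hpt.cancel hd.2 htm h0).2
            rw [hNs, hfs]
          · have hz1 : (f s).coeff m = 0 := by
              by_contra h
              exact hms (hf_supp s m hd.1 h)
            have hz2 : (f' s).coeff m = 0 := by
              by_contra h
              exact hms (hf'_supp s m hd.1 h)
            rw [hz1, hz2, mul_zero, mul_zero]
      · have hd := hN_dom μ ν s h1
        by_cases hms : SubLE C m s
        · have hts' : SubLE C t s := subLE_trans htm hms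
          have hNs : N μ ν s = N' μ ν s := by
            by_cases hst' : s = t
            · rw [hst']; exact hNt
            · by_contra hne
              exact hsm (hmax s (Finset.mem_filter.2 ⟨hsS, hts', hst', hne⟩) hms)
          have hfs : (f s).coeff m = (f' s).coeff m := by
            refine hsx s m hd.1 hd.2 (subLE_of_diff_eq hd.2 htm (by abel)) ?_
            intro hEqd
            have h0 : ((μ + ν) - s) + (m - t) = 0 := by
              rw [show ((μ + ν) - s) + (m - t) = (μ + ν - t) - (s - m) by abel,
                ← hEqd, sub_self]
            exact hmt (hpt.cancel hd.2 htm h0).2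
          rw [hNs, hfs]
        · have hz1 : (f s).coeff m = 0 := by
            by_contra h
            exact hms (hf_supp s m hd.1 h)
          have hz2 : (f' s).coeff m = 0 := by
            by_contra h
            exact hms (hf'_supp s m hd.1 h)
          rw [hz1, hz2, mul_zero, mul_zero]
    have hsum0 : ∑ s ∈ S, (N μ ν s * (f s).coeff m - N' μ ν s * (f' s).coeff m) = 0 := by
      rw [Finset.sum_sub_distrib, he, sub_self]
    rw [Finset.sum_eq_single m (fun s hs hsm => by rw [hterm s hs hsm, sub_self])
      (fun h => absurd hmS h)] at hsum0
    rw [hf_lead m hmdom.1, hf'_lead m hmdom.1, mul_one, mul_one] at hsum0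
    exact hNm (by omega)
  -- Step D: leading structure constants are 1
  have hrhs : (f μ * f ν).coeff (μ + ν) = 1 := by
    rw [mul_coeff_congr (f μ) (f ν) (AddMonoidAlgebra.single μ 1)
      (AddMonoidAlgebra.single ν 1) _ ?_]
    · rw [AddMonoidAlgebra.single_mul_single, mul_one]
      exact Finsupp.single_eq_same
    · intro y z hyz
      by_cases hy : y = μ
      · have hz : z = ν := by
          rw [hy] at hyz
          exact add_left_cancel hyz
        rw [hy, hz, hf_lead μ hμ, hf_lead ν hν, AddMonoidAlgebra.coeff_single, AddMonoidAlgebra.coeff_single,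
          Finsupp.single_eq_same, Finsupp.single_eq_same]
      · rw [AddMonoidAlgebra.coeff_single, Finsupp.single_eq_of_ne' (Ne.symm hy), zero_mul]
        by_contra hL
        have hy1 : (f μ).coeff y ≠ 0 := left_ne_zero_of_mul hL
        have hz1 : (f ν).coeff z ≠ 0 := right_ne_zero_of_mul hL
        have h1 := hf_supp μ y hμ hy1
        have h2 := hf_supp ν z hν hz1
        have h0 : (μ - y) + (ν - z) = 0 := by
          rw [show (μ - y) + (ν - z) = (μ + ν) - (y + z) by abel, hyz, sub_self]
        exact hy (hpt.cancel h1 h2 h0).1.symm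
  have hrhs' : (f' μ * f' ν).coeff (μ + ν) = 1 := by
    rw [mul_coeff_congr (f' μ) (f' ν) (AddMonoidAlgebra.single μ 1)
      (AddMonoidAlgebra.single ν 1) _ ?_]
    · rw [AddMonoidAlgebra.single_mul_single, mul_one]
      exact Finsupp.single_eq_same
    · intro y z hyz
      by_cases hy : y = μ
      · have hz : z = ν := by
          rw [hy] at hyz
          exact add_left_cancel hyz
        rw [hy, hz, hf'_lead μ hμ, hf'_lead ν hν, AddMonoidAlgebra.coeff_single, AddMonoidAlgebra.coeff_single,
          Finsupp.single_eq_same, Finsupp.single_eq_same]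
      · rw [AddMonoidAlgebra.coeff_single, Finsupp.single_eq_of_ne' (Ne.symm hy), zero_mul]
        by_contra hL
        have hy1 : (f' μ).coeff y ≠ 0 := left_ne_zero_of_mul hL
        have hz1 : (f' ν).coeff z ≠ 0 := right_ne_zero_of_mul hL
        have h1 := hf'_supp μ y hμ hy1
        have h2 := hf'_supp ν z hν hz1
        have h0 : (μ - y) + (ν - z) = 0 := by
          rw [show (μ - y) + (ν - z) = (μ + ν) - (y + z) by abel, hyz, sub_self]
        exact hy (hpt.cancel h1 h2 h0).1.symm
  have hNlam : N μ ν (μ + ν) = 1 := by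
    have hl := hEQ (μ + ν)
    rw [Finset.sum_eq_single (μ + ν) ?_ ?_] at hl
    · rw [hf_lead _ hdomlam, mul_one] at hl
      rw [← hl, hrhs]
    · intro s hsS hsne
      rcases eq_or_ne (N μ ν s) 0 with h1 | h1
      · rw [h1, zero_mul]
      · have hd := hN_dom μ ν s h1
        have : (f s).coeff (μ + ν) = 0 := by
          by_contra h
          exact hsne (hpt.antisymm (hf_supp s (μ + ν) hd.1 h) hd.2).symm
        rw [this, mul_zero]
    · intro h
      have : N μ ν (μ + ν) = 0 := by
        by_contra h1
        exact h ((hmemS _).2 (Or.inl h1))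
      rw [this, zero_mul]
  have hN'lam : N' μ ν (μ + ν) = 1 := by
    have hl := hEQ' (μ + ν)
    rw [Finset.sum_eq_single (μ + ν) ?_ ?_] at hl
    · rw [hf'_lead _ hdomlam, mul_one] at hl
      rw [← hl, hrhs']
    · intro s hsS hsne
      rcases eq_or_ne (N' μ ν s) 0 with h1 | h1
      · rw [h1, zero_mul]
      · have hd := hN'_dom μ ν s h1
        have : (f' s).coeff (μ + ν) = 0 := by
          by_contra h
          exact hsne (hpt.antisymm (hf'_supp s (μ + ν) hd.1 h) hd.2).symm
        rw [this, mul_zero]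
    · intro h
      have : N' μ ν (μ + ν) = 0 := by
        by_contra h1
        exact h ((hmemS _).2 (Or.inr h1))
      rw [this, zero_mul]
  -- final assembly
  by_cases htl : SubLE C t (μ + ν)
  · by_cases hteq : t = μ + ν
    · subst hteq
      rw [hf_lead _ hdomlam, hf'_lead _ hdomlam, hNt]
    · have he := (hEQ t).symm.trans ((hprodeq t (subLE_refl C t)).trans (hEQ' t))
      have hterm : ∀ s ∈ S, s ≠ (μ + ν) → N μ ν s * (f s).coeff t = N' μ ν s * (f' s).coeff t := by
        intro s hsS hsne
        have hd : N μ ν s ≠ 0 ∨ N' μ ν s ≠ 0 → IsDominant s ∧ SubLE C s (μ + ν) := by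
          intro h
          rcases eq_or_ne (N μ ν s) 0 with h1 | h1
          · exact hN'_dom μ ν s (h.resolve_left (fun hc => hc h1))
          · exact hN_dom μ ν s h1
        rcases eq_or_ne (N μ ν s) 0 with h1 | h1
        · rcases eq_or_ne (N' μ ν s) 0 with h2 | h2
          · rw [h1, h2, zero_mul, zero_mul]
          · have hds := hd (Or.inr h2)
            by_cases hts : SubLE C t s
            · have hNs : N μ ν s = N' μ ν s := by
                by_cases hst' : s = t
                · rw [hst']; exact hNt
                · exact hNagree s hts hst'
              have hfs : (f s).coeff t = (f' s).coeff t := by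
                refine hsx s t hds.1 hds.2
                  (subLE_of_diff_eq hds.2 (subLE_refl C t) (by abel)) ?_
                intro hEqd
                exact hsne (by
                  have := sub_left_inj.mp hEqd
                  exact this)
              rw [hNs, hfs]
            · have hz1 : (f s).coeff t = 0 := by
                by_contra h
                exact hts (hf_supp s t hds.1 h)
              have hz2 : (f' s).coeff t = 0 := by
                by_contra h
                exact hts (hf'_supp s t hds.1 h)
              rw [hz1, hz2, mul_zero, mul_zero]
        · have hds := hd (Or.inl h1)
          by_cases hts : SubLE C t s
          · have hNs : N μ ν s = N' μ ν s := by
              by_cases hst' : s = t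
              · rw [hst']; exact hNt
              · exact hNagree s hts hst'
            have hfs : (f s).coeff t = (f' s).coeff t := by
              refine hsx s t hds.1 hds.2
                (subLE_of_diff_eq hds.2 (subLE_refl C t) (by abel)) ?_
              intro hEqd
              exact hsne (by
                have := sub_left_inj.mp hEqd
                exact this)
            rw [hNs, hfs]
          · have hz1 : (f s).coeff t = 0 := by
              by_contra h
              exact hts (hf_supp s t hds.1 h)
            have hz2 : (f' s).coeff t = 0 := by
              by_contra h
              exact hts (hf'_supp s t hds.1 h)
            rw [hz1, hz2, mul_zero, mul_zero]
      have hsum0 : ∑ s ∈ S, (N μ ν s * (f s).coeff t - N' μ ν s * (f' s).coeff t) = 0 := by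
        rw [Finset.sum_sub_distrib, he, sub_self]
      have hlamS : (μ + ν) ∈ S := (hmemS _).2 (Or.inl (by rw [hNlam]; exact one_ne_zero))
      rw [Finset.sum_eq_single (μ + ν) (fun s hs hsne => by rw [hterm s hs hsne, sub_self])
        (fun h => absurd hlamS h)] at hsum0
      rw [hNlam, hN'lam, one_mul, one_mul] at hsum0
      rw [sub_eq_zero.mp hsum0, hNt]
  · have h1 : (f (μ + ν)).coeff t = 0 := by
      by_contra h
      exact htl (hf_supp _ t hdomlam h)
    have h2 : (f' (μ + ν)).coeff t = 0 := by
      by_contra h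
      exact htl (hf'_supp _ t hdomlam h)
    rw [h1, h2, hNt]
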